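/- Let Φ : ℝ → ℝ be positive and nondecreasing, and suppose there are constants c₁ > 0 and c₂ with 1 ≤ c₂ < 2 such that Φ(2x) ≤ c₂·Φ(x) for all x > c₁. Then for every c₂' with c₂ < c₂' < 2 there exists T₀ such that the following holds for every integer T ≥ T₀ and every integer i with 2^{i−1} > c₁, Φ(2^{i−1}) < 2^{i−1}, Φ(2^i) < 2^i, and 2^i ≤ √T: setting d_j = ⌊√(T·2^j / Φ(2^j))⌋ for j ∈ {i−1, i}, the number of points u ∈ ℤ² with d_{i−1} < ‖u‖₁ ≤ d_i is at least (2 − c₂')·T·2^i / Φ(2^i). -/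

import Mathlib

open Finset

private noncomputable def iball (n : ℕ) : Finset (ℤ × ℤ) :=
  ((Finset.Icc (-(n:ℤ)) n) ×ˢ (Finset.Icc (-(n:ℤ)) n)).filter (fun u => |u.1| + |u.2| ≤ (n:ℤ))

private lemma mem_iball {n : ℕ} {u : ℤ × ℤ} : u ∈ iball n ↔ |u.1| + |u.2| ≤ (n:ℤ) := by
  simp only [iball, Finset.mem_filter, Finset.mem_product, Finset.mem_Icc]
  constructor
  · tauto
  · intro h
    have h1 : |u.1| ≤ (n:ℤ) := le_trans (le_add_of_nonneg_right (abs_nonneg _)) h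
    have h2 : |u.2| ≤ (n:ℤ) := le_trans (le_add_of_nonneg_left (abs_nonneg _)) h
    rw [abs_le] at h1 h2
    exact ⟨⟨⟨h1.1, h1.2⟩, h2.1, h2.2⟩, h⟩

private lemma sum_abs_Icc (n : ℕ) : ∑ x ∈ Finset.Icc (-(n:ℤ)) (n:ℤ), |x| = n * (n+1) := by
  induction n with
  | zero => simp
  | succ n ih =>
    have h : Finset.Icc (-((n:ℤ)+1)) ((n:ℤ)+1)
        = insert (-((n:ℤ)+1)) (insert ((n:ℤ)+1) (Finset.Icc (-(n:ℤ)) (n:ℤ))) := by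
      ext x; simp only [Finset.mem_Icc, Finset.mem_insert]; omega
    push_cast
    rw [h, Finset.sum_insert, Finset.sum_insert]
    · rw [ih]
      have hn : (0:ℤ) ≤ (n:ℤ) + 1 := by positivity
      rw [abs_neg, abs_of_nonneg hn]
      ring
    · simp only [Finset.mem_Icc]; omega
    · simp only [Finset.mem_insert, Finset.mem_Icc]; omega

private lemma iball_card (n : ℕ) : ((iball n).card : ℤ) = 2*n^2 + 2*n + 1 := by
  have hfib : ∀ x ∈ Finset.Icc (-(n:ℤ)) (n:ℤ),
      ((iball n).filter (fun u => u.1 = x)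
        = (Finset.Icc (-((n:ℤ) - |x|)) ((n:ℤ) - |x|)).image (fun y => (x, y))) := by
    intro x hx
    simp only [Finset.mem_Icc] at hx
    ext ⟨p, q⟩
    simp only [Finset.mem_filter, Finset.mem_image, Finset.mem_Icc, mem_iball]
    constructor
    · rintro ⟨h, rfl⟩
      refine ⟨q, ?_, rfl⟩
      have h1 := le_abs_self q
      have h2 := neg_abs_le q
      omega
    · rintro ⟨y, hy, heq⟩
      obtain ⟨rfl, rfl⟩ : x = p ∧ y = q := Prod.mk.injEq .. ▸ heq
      have h4 : |y| ≤ (n:ℤ) - |x| := abs_le.2 hy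
      have h3 := abs_nonneg y
      constructor
      · omega
      · rfl
  have hcard := Finset.card_eq_sum_card_fiberwise
    (f := fun u : ℤ × ℤ => u.1) (s := iball n) (t := Finset.Icc (-(n:ℤ)) (n:ℤ))
    (by intro u hu; rw [Finset.mem_coe, mem_iball] at hu
        simp only [Finset.mem_coe, Finset.mem_Icc]
        have h1 : |u.1| ≤ (n:ℤ) := le_trans (le_add_of_nonneg_right (abs_nonneg _)) hu
        rw [abs_le] at h1; exact h1)
  rw [hcard]
  push_cast
  rw [Finset.sum_congr rfl (fun x hx => by
    rw [hfib x hx, Finset.card_image_of_injective _ (fun a b h => (Prod.mk.injEq .. ▸ h).2),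
      Int.card_Icc])]
  have : ∀ x ∈ Finset.Icc (-(n:ℤ)) (n:ℤ),
      ((((n:ℤ) - |x|) + 1 - (-((n:ℤ) - |x|))).toNat : ℤ) = 2*((n:ℤ) - |x|) + 1 := by
    intro x hx
    simp only [Finset.mem_Icc] at hx
    have : |x| ≤ (n:ℤ) := abs_le.2 ⟨hx.1, hx.2⟩
    omega
  rw [Finset.sum_congr rfl this, Finset.sum_add_distrib, ← Finset.mul_sum,
    Finset.sum_sub_distrib, sum_abs_Icc]
  simp only [Finset.sum_const, Int.card_Icc, smul_eq_mul]
  have : ((n:ℤ) + 1 - (-(n:ℤ))).toNat = 2*n+1 := by omega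
  rw [this]
  push_cast
  ring


private lemma ring_ncard' (a b : ℕ) (hab : a ≤ b) :
    (({u : ℤ × ℤ | (a:ℤ) < |u.1| + |u.2| ∧ |u.1| + |u.2| ≤ (b:ℤ)}).ncard : ℝ)
      = 2*b^2 + 2*b - (2*a^2 + 2*a) := by
  have hsub : iball a ⊆ iball b := by
    intro u hu
    rw [mem_iball] at *
    exact le_trans hu (by exact_mod_cast hab)
  have hset : {u : ℤ × ℤ | (a:ℤ) < |u.1| + |u.2| ∧ |u.1| + |u.2| ≤ (b:ℤ)}
      = ↑(iball b \ iball a) := by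
    ext u
    simp only [Set.mem_setOf_eq, Finset.coe_sdiff, Set.mem_diff, Finset.mem_coe, mem_iball]
    omega
  rw [hset, Set.ncard_coe_finset, Finset.card_sdiff_of_subset hsub]
  have hcle : (iball a).card ≤ (iball b).card := Finset.card_le_card hsub
  rw [Nat.cast_sub hcle]
  have h1 : ((iball a).card : ℝ) = 2*a^2 + 2*a + 1 := by exact_mod_cast iball_card a
  have h2 : ((iball b).card : ℝ) = 2*b^2 + 2*b + 1 := by exact_mod_cast iball_card b
  rw [h1, h2]; ring



theorem ring_card_relatively_slow (Φ : ℝ → ℝ) (hpos : ∀ x : ℝ, 0 < Φ x)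
    (hmono : Monotone Φ) (c₁ c₂ : ℝ) (hc₁ : 0 < c₁) (hc₂₁ : 1 ≤ c₂) (hc₂₂ : c₂ < 2)
    (hdbl : ∀ x : ℝ, c₁ < x → Φ (2 * x) ≤ c₂ * Φ x)
    (c₂' : ℝ) (hc₂' : c₂ < c₂') (hc₂'2 : c₂' < 2) :
    ∃ T₀ : ℕ, ∀ T : ℕ, T₀ ≤ T → ∀ i : ℕ, 1 ≤ i →
      c₁ < (2 : ℝ) ^ (i - 1) →
      Φ ((2 : ℝ) ^ (i - 1)) < (2 : ℝ) ^ (i - 1) →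
      Φ ((2 : ℝ) ^ i) < (2 : ℝ) ^ i →
      (2 : ℝ) ^ i ≤ Real.sqrt T →
      (2 - c₂') * T * 2 ^ i / Φ ((2 : ℝ) ^ i) ≤
        (Set.ncard {u : ℤ × ℤ |
            (⌊Real.sqrt ((T : ℝ) * 2 ^ (i - 1) / Φ ((2 : ℝ) ^ (i - 1)))⌋₊ : ℤ)
                < |u.1| + |u.2| ∧
            |u.1| + |u.2| ≤
              (⌊Real.sqrt ((T : ℝ) * 2 ^ i / Φ ((2 : ℝ) ^ i))⌋₊ : ℤ)} : ℝ) := by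
  set δ : ℝ := c₂' - c₂ with hδdef
  have hδ : 0 < δ := by simp [hδdef]; linarith
  refine ⟨⌈(4/δ)^2⌉₊ + 1, ?_⟩
  intro T hT i hi hc₁A hΦA hΦB hBT
  set A : ℝ := (2:ℝ) ^ (i-1) with hAdef
  set B : ℝ := (2:ℝ) ^ i with hBdef
  have hApos : 0 < A := by positivity
  have hBA : B = 2 * A := by
    have h : (i-1)+1 = i := Nat.succ_pred_eq_of_pos hi
    calc B = (2:ℝ) ^ ((i-1)+1) := by rw [h]
      _ = 2 * A := by rw [pow_succ, hAdef]; ring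
  have hΦAp := hpos A
  have hΦBp := hpos B
  set X : ℝ := (T:ℝ) * B / Φ B with hXdef
  set Y : ℝ := (T:ℝ) * A / Φ A with hYdef
  set b : ℕ := ⌊Real.sqrt X⌋₊ with hbdef
  set a : ℕ := ⌊Real.sqrt Y⌋₊ with hadef
  -- basic bounds
  have hT1 : (1:ℝ) ≤ (T:ℝ) := by
    have : 1 ≤ T := by omega
    exact_mod_cast this
  have hTsq : (4/δ)^2 ≤ (T:ℝ) := by
    have h1 : ((4/δ)^2 : ℝ) ≤ (⌈(4/δ)^2⌉₊ : ℝ) := Nat.le_ceil _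
    have h2 : ((⌈(4/δ)^2⌉₊ : ℕ) : ℝ) ≤ (T:ℝ) := by
      have : (⌈(4/δ)^2⌉₊ : ℕ) ≤ T := by omega
      exact_mod_cast this
    linarith
  have hTX : (T:ℝ) ≤ X := by
    rw [hXdef, le_div_iff₀ hΦBp]
    nlinarith [hΦB.le, hT1]
  have hX1 : (1:ℝ) ≤ X := le_trans hT1 hTX
  have hX0 : (0:ℝ) ≤ X := by linarith
  have hY0 : (0:ℝ) ≤ Y := by positivity
  -- doubling
  have hdblB2 : Φ (2 * A) ≤ c₂ * Φ A := hdbl A hc₁A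
  have hdblB : Φ B ≤ c₂ * Φ A := by rw [hBA]; exact hdblB2
  have hYX : Y ≤ (c₂/2) * X := by
    have h2 : (c₂/2) * X = ((c₂/2) * ((T:ℝ) * B)) / Φ B := by rw [hXdef]; ring
    rw [hYdef, h2, div_le_div_iff₀ hΦAp hΦBp, hBA]
    have h3 := mul_le_mul_of_nonneg_left hdblB2
      (by positivity : (0:ℝ) ≤ (T:ℝ) * A)
    linarith [h3]
  have hYX' : Y ≤ X := le_trans hYX (by nlinarith)
  have hab : a ≤ b := Nat.floor_mono (Real.sqrt_le_sqrt hYX')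
  -- sqrt facts
  set s : ℝ := Real.sqrt X with hsdef
  have hss : s * s = X := Real.mul_self_sqrt hX0
  have hs1 : 1 ≤ s := by
    rw [hsdef]
    have h := Real.sqrt_le_sqrt hX1
    rwa [Real.sqrt_one] at h
  have hsT : Real.sqrt T ≤ s := Real.sqrt_le_sqrt hTX
  have hs4 : 4/δ ≤ s := by
    have h1 : 4/δ ≤ Real.sqrt T := by
      rw [show (4/δ : ℝ) = Real.sqrt ((4/δ)^2) from
        (Real.sqrt_sq (by positivity)).symm]
      exact Real.sqrt_le_sqrt hTsq
    linarith
  have hs4' : 4 * s ≤ δ * X := by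
    have h1 : 4 ≤ δ * s := by
      rw [div_le_iff₀ hδ] at hs4; linarith [hs4]
    have h0 : (0:ℝ) ≤ s := by linarith
    have h2 := mul_le_mul_of_nonneg_right h1 h0
    have h3 : δ * s * s = δ * X := by rw [mul_assoc, hss]
    linarith [h2, h3]
  -- floor bounds
  have hbge : s - 1 ≤ (b:ℝ) := by
    have := Nat.sub_one_lt_floor s
    linarith
  have hb2 : X - 2*s + 1 ≤ (b:ℝ)^2 := by
    have h0 : 0 ≤ s - 1 := by linarith
    have h1 := mul_self_le_mul_self h0 hbge
    have h2 : (s-1)*(s-1) = X - 2*s + 1 := by rw [← hss]; ring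
    have h3 : (b:ℝ)*(b:ℝ) = (b:ℝ)^2 := by ring
    linarith
  have ha2 : (a:ℝ)^2 ≤ Y := by
    have h1 : (a:ℝ) ≤ Real.sqrt Y := Nat.floor_le (Real.sqrt_nonneg _)
    have h2 := mul_self_le_mul_self (Nat.cast_nonneg a : (0:ℝ) ≤ (a:ℝ)) h1
    have h3 := Real.mul_self_sqrt hY0
    have h4 : (a:ℝ)*(a:ℝ) = (a:ℝ)^2 := by ring
    linarith
  have habR : (a:ℝ) ≤ (b:ℝ) := by exact_mod_cast hab
  -- rewrite goal
  rw [ring_ncard' a b hab]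
  have hLHS : (2 - c₂') * (T:ℝ) * 2 ^ i / Φ ((2:ℝ) ^ i) = (2 - c₂') * X := by
    rw [hXdef, hBdef]; ring
  rw [hLHS]
  -- final arithmetic
  have k1 : 2*(a:ℝ)^2 ≤ c₂ * X := by linarith
  have hLHS2 : (2 - c₂') * X = 2*X - c₂*X - δ*X := by rw [hδdef]; ring
  rw [hLHS2]
  linarith [hb2, k1, hs4', habR]
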